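/- arXiv:1403.4653 — 4 statements merged into one kernel-verified Lean document; each statement's English description precedes it below -/
import Mathlib

section
/- For any integer r ≥ 4, if x₀ = 2^{1/(r-1)}, then (1 + x₀)^{r-1} is irrational. -/
open Polynomial

lemma irred_aux (n : ℕ) (hn : 3 ≤ n) : Irreducible ((X : ℚ[X]) ^ n - C 2) := by
  have hn0 : n ≠ 0 := by omega
  have hmonic : ((X : ℤ[X]) ^ n - C 2).Monic := monic_X_pow_sub_C _ hn0
  have hirr : Irreducible ((X : ℤ[X]) ^ n - C 2) := by
    apply irreducible_of_eisenstein_criterion (P := Ideal.span {(2 : ℤ)})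
    · exact Ideal.span_singleton_prime (by norm_num) |>.mpr Int.prime_two
    · rw [hmonic.leadingCoeff]
      simp [Ideal.mem_span_singleton]
    · intro m hm
      have hmn : m < n := by
        rw [degree_X_pow_sub_C (by omega) (2:ℤ)] at hm
        exact_mod_cast hm
      simp only [coeff_sub, coeff_X_pow, coeff_C]
      rcases eq_or_ne m 0 with rfl | hm0
      · simp [Ideal.mem_span_singleton, Ne.symm hn0]
      · simp [hmn.ne, hm0]
    · rw [degree_X_pow_sub_C (by omega)]
      exact_mod_cast Nat.pos_of_ne_zero hn0
    · have h : ((X:ℤ[X]) ^ n - C 2).coeff 0 = -2 := by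
        simp [coeff_X_pow, Ne.symm hn0]
      rw [h, Ideal.span_singleton_pow, Ideal.mem_span_singleton]
      norm_num
    · exact hmonic.isPrimitive
  have := (hmonic.irreducible_iff_irreducible_map_fraction_map (K := ℚ)).mp hirr
  rwa [Polynomial.map_sub, Polynomial.map_pow, Polynomial.map_X, Polynomial.map_C,
    map_ofNat] at this

theorem stmt_4 (r : ℕ) (hr : 4 ≤ r) (x₀ : ℝ) (hx₀ : x₀ = (2:ℝ) ^ (((r:ℝ) - 1)⁻¹)) :
    Irrational ((1 + x₀) ^ (r - 1)) := by
  set n := r - 1 with hn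
  have hn3 : 3 ≤ n := by omega
  have hn0 : n ≠ 0 := by omega
  have hrn : ((r:ℝ) - 1) = (n:ℝ) := by
    have h : n + 1 = r := by omega
    push_cast [← h]; ring
  have hx : x₀ ^ n = 2 := by
    rw [hx₀, hrn]
    exact Real.rpow_inv_natCast_pow (by norm_num) hn0
  rintro ⟨q, hq⟩
  have hPm : ((X : ℚ[X]) ^ n - C 2).Monic := monic_X_pow_sub_C _ hn0
  have hmin : (X : ℚ[X]) ^ n - C 2 = minpoly ℚ x₀ := by
    refine minpoly.eq_of_irreducible_of_monic (irred_aux n hn3) ?_ hPm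
    simp [hx]
  have hQm : (((X : ℚ[X]) + 1) ^ n - C q).Monic := by
    refine Monic.sub_of_left ?_ ?_
    · have := (monic_X_add_C (1:ℚ)).pow n
      rwa [map_one] at this
    · calc degree (C q) ≤ 0 := degree_C_le
        _ < (n : WithBot ℕ) := by exact_mod_cast Nat.pos_of_ne_zero hn0
        _ = degree (((X : ℚ[X]) + 1) ^ n) := by
            rw [← C_1, degree_pow, degree_X_add_C]; simp
  have haQ : aeval x₀ (((X : ℚ[X]) + 1) ^ n - C q) = 0 := by
    simp only [map_sub, map_pow, map_add, aeval_X, map_one, aeval_C]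
    rw [show (algebraMap ℚ ℝ) q = (q:ℝ) from rfl, hq, add_comm]
    ring
  have hdvd : (X : ℚ[X]) ^ n - C 2 ∣ ((X : ℚ[X]) + 1) ^ n - C q := by
    rw [hmin]; exact minpoly.dvd ℚ x₀ haQ
  obtain ⟨c, hc⟩ := hdvd
  have hcm : c.Monic := hPm.of_mul_monic_left (hc ▸ hQm)
  have hdeg : c.natDegree = 0 := by
    have h1 : (((X : ℚ[X]) + 1) ^ n - C q).natDegree = n := by
      rw [natDegree_sub_C, ← C_1, natDegree_pow, natDegree_X_add_C, mul_one]
    have h2 : ((X : ℚ[X]) ^ n - C 2).natDegree = n := natDegree_X_pow_sub_C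
    have := natDegree_mul hPm.ne_zero hcm.ne_zero
    rw [← hc, h1, h2] at this
    omega
  have hc1 : c = 1 := hcm.natDegree_eq_zero.mp hdeg
  rw [hc1, mul_one] at hc
  have hcoeff := congrArg (fun p => Polynomial.coeff p (n - 1)) hc
  simp only [coeff_sub, coeff_X_pow, coeff_X_add_one_pow, coeff_C] at hcoeff
  rw [if_neg (by omega), if_neg (by omega), if_neg (by omega)] at hcoeff
  have hch : n.choose (n - 1) = n := by
    rw [Nat.choose_symm (by omega : 1 ≤ n), Nat.choose_one_right]
  rw [sub_zero, sub_zero] at hcoeff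
  have : (n : ℚ) = 0 := by rw [← hch]; exact_mod_cast hcoeff
  exact_mod_cast hn0 (by exact_mod_cast this)
end

section
/- Let r ≥ 2, α, β ∈ [0,1), and 0 ≤ ε ≤ α. Then α ⊕_r β ≥ (α - ε) ⊕_r β + ε · ((1-β)^{1/(r-1)} / (1 + (1-β)^{1/(r-1)}))^r, where α ⊕_r β = 1 - (1-α)(1-β)/((1-α)^{1/(r-1)} + (1-β)^{1/(r-1)})^{r-1}. -/
open Set

lemma mvt_ge (f f' : ℝ → ℝ) (a b m : ℝ) (hab : a ≤ b)
    (hd : ∀ x ∈ Set.Icc a b, HasDerivAt f (f' x) x)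
    (hm : ∀ x ∈ Set.Icc a b, m ≤ f' x) :
    m * (b - a) ≤ f b - f a := by
  have hlin : ∀ x : ℝ, HasDerivAt (fun y : ℝ => m * y) m x := by
    intro x; simpa using (hasDerivAt_id x).const_mul m
  have key : MonotoneOn (fun x => f x - m * x) (Set.Icc a b) := by
    apply monotoneOn_of_deriv_nonneg (convex_Icc a b)
    · exact fun x hx => ((hd x hx).sub (hlin x)).continuousAt.continuousWithinAt
    · intro x hx
      exact ((hd x (interior_subset hx)).sub (hlin x)).differentiableAt.differentiableWithinAt
    · intro x hx
      have hx' : x ∈ Set.Icc a b := interior_subset hx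
      rw [show deriv (fun x => f x - m * x) x = f' x - m from ((hd x hx').sub (hlin x)).deriv]
      have := hm x hx'
      linarith
  have := key (Set.left_mem_Icc.2 hab) (Set.right_mem_Icc.2 hab) hab
  simp only at this
  linarith

lemma deriv_g (s : ℕ) (hs : 1 ≤ s) (β : ℝ) (hβ0 : 0 ≤ β) (hβ1 : β < 1) (x : ℝ) (hx : 0 < x) :
    HasDerivAt (fun y : ℝ => y * (1 - β) / (y ^ ((s:ℝ)⁻¹) + (1-β)^((s:ℝ)⁻¹)) ^ s)
      (((1-β)^((s:ℝ)⁻¹) / (x ^ ((s:ℝ)⁻¹) + (1-β)^((s:ℝ)⁻¹))) ^ (s+1)) x := by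
  obtain ⟨t, rfl⟩ : ∃ t, s = t + 1 := ⟨s - 1, (Nat.succ_pred_eq_of_pos hs).symm⟩
  set e : ℝ := ((t+1:ℕ):ℝ)⁻¹ with he
  set b : ℝ := (1-β) ^ e with hb
  have hs0 : ((t+1:ℕ):ℝ) ≠ 0 := by positivity
  have h1β : (0:ℝ) < 1 - β := by linarith
  have hbpos : 0 < b := Real.rpow_pos_of_pos h1β e
  have hupos : 0 < x ^ e := Real.rpow_pos_of_pos hx e
  have hcpos : 0 < x ^ e + b := by linarith
  have h1 : HasDerivAt (fun y : ℝ => y ^ e) (e * x ^ (e - 1)) x :=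
    Real.hasDerivAt_rpow_const (Or.inl hx.ne')
  have h2 : HasDerivAt (fun y : ℝ => (y ^ e + b) ^ (t+1))
      (((t+1:ℕ)) * (x ^ e + b) ^ t * (e * x ^ (e - 1))) x := by
    refine HasDerivAt.congr_deriv (f := fun y : ℝ => (y ^ e + b) ^ (t+1)) ((h1.add_const b).pow (t+1)) ?_
    simp
  have h3 : HasDerivAt (fun y : ℝ => y * (1 - β)) (1 - β) x := by
    simpa using (hasDerivAt_id x).mul_const (1 - β)
  have h4 := h3.div h2 (by positivity)
  refine HasDerivAt.congr_deriv h4 ?_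
  have hxe : x * x ^ (e - 1) = x ^ e := by
    nth_rewrite 1 [← Real.rpow_one x]
    rw [← Real.rpow_add hx]; ring_nf
  have h5 : ((t+1:ℕ):ℝ) * e = 1 := mul_inv_cancel₀ hs0
  have key : x * (1 - β) * (((t+1:ℕ):ℝ) * (x ^ e + b) ^ t * (e * x ^ (e-1)))
      = (1-β) * (x ^ e + b) ^ t * (x ^ e) := by
    calc x * (1 - β) * (((t+1:ℕ):ℝ) * (x ^ e + b) ^ t * (e * x ^ (e-1)))
        = (1-β) * (x ^ e + b) ^ t * ((((t+1:ℕ):ℝ) * e) * (x * x ^ (e-1))) := by ring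
      _ = _ := by rw [h5, one_mul, hxe]
  have hbs : (1 - β) = b ^ (t+1) := by
    rw [hb, ← Real.rpow_natCast ((1-β)^e) (t+1), ← Real.rpow_mul h1β.le,
      inv_mul_cancel₀ hs0, Real.rpow_one]
  rw [key]
  rw [hbs]
  rw [div_pow]
  field_simp
  ring

theorem stmt_8 (r : ℕ) (hr : 2 ≤ r) (α β ε : ℝ)
    (hα : α ∈ Set.Ico (0:ℝ) 1) (hβ : β ∈ Set.Ico (0:ℝ) 1)
    (hε : 0 ≤ ε) (hεα : ε ≤ α) :
    1 - (1 - α) * (1 - β) /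
        ((1 - α) ^ (((r:ℝ) - 1)⁻¹) + (1 - β) ^ (((r:ℝ) - 1)⁻¹)) ^ (r - 1)
    ≥ (1 - (1 - (α - ε)) * (1 - β) /
        ((1 - (α - ε)) ^ (((r:ℝ) - 1)⁻¹) + (1 - β) ^ (((r:ℝ) - 1)⁻¹)) ^ (r - 1))
      + ε * ((1 - β) ^ (((r:ℝ) - 1)⁻¹) / (1 + (1 - β) ^ (((r:ℝ) - 1)⁻¹))) ^ r := by
  obtain ⟨s, rfl⟩ : ∃ s, r = s + 1 := ⟨r - 1, (Nat.succ_pred_eq_of_pos (by omega)).symm⟩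
  have hs : 1 ≤ s := by omega
  have hcast : ((s+1:ℕ):ℝ) - 1 = ((s:ℕ):ℝ) := by push_cast; ring
  have hnat : s + 1 - 1 = s := by omega
  rw [hcast, hnat]
  obtain ⟨hα0, hα1⟩ := hα
  obtain ⟨hβ0, hβ1⟩ := hβ
  set e : ℝ := ((s:ℕ):ℝ)⁻¹ with he
  set b : ℝ := (1-β) ^ e with hb
  have h1β : (0:ℝ) < 1 - β := by linarith
  have hbpos : 0 < b := Real.rpow_pos_of_pos h1β e
  have hrw : 1 - (α - ε) = 1 - α + ε := by ring
  rw [hrw]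
  set m : ℝ := (b / (1 + b)) ^ (s+1) with hm
  have H := mvt_ge (fun y : ℝ => y * (1 - β) / (y ^ e + b) ^ s)
      (fun y : ℝ => (b / (y ^ e + b)) ^ (s+1)) (1 - α) (1 - α + ε) m
      (by linarith)
      (fun x hx => by
        have hx0 : 0 < x := by have := hx.1; linarith
        exact deriv_g s hs β hβ0 hβ1 x hx0)
      (fun x hx => by
        have hx0 : 0 < x := by have := hx.1; linarith
        have hx1 : x ≤ 1 := by have := hx.2; linarith
        have hxe1 : x ^ e ≤ 1 := Real.rpow_le_one hx0.le hx1 (by positivity)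
        have hxe0 : 0 < x ^ e := Real.rpow_pos_of_pos hx0 e
        have hdiv : b / (1 + b) ≤ b / (x ^ e + b) := by
          apply div_le_div_of_nonneg_left hbpos.le (by linarith)
          linarith
        exact pow_le_pow_left₀ (by positivity) hdiv (s+1))
  have hεrw : (1 - α + ε) - (1 - α) = ε := by ring
  rw [hεrw, mul_comm] at H
  linarith
end

section
/- For any subset A ⊆ [0,1) with positive Lebesgue measure that is a Borel set, if A is closed under the operation ⊕_r (with r ≥ 2), then A contains an open interval. -/
noncomputable def oplus (r : ℕ) (a b : ℝ) : ℝ :=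
  if a = 1 ∧ b = 1 then 1
  else 1 - (1 - a) * (1 - b) /
    ((1 - a) ^ (((r:ℝ) - 1)⁻¹) + (1 - b) ^ (((r:ℝ) - 1)⁻¹)) ^ (r - 1)


open MeasureTheory Set Real Pointwise
open scoped ENNReal NNReal

noncomputable def gg (r : ℕ) (x : ℝ) : ℝ := 1 - (max x 1) ^ (-((r:ℝ) - 1))

lemma hs_ge (r : ℕ) (hr : 2 ≤ r) : (1:ℝ) ≤ (r:ℝ) - 1 := by
  have : (2:ℝ) ≤ (r:ℝ) := by exact_mod_cast hr
  linarith

lemma gg_continuous (r : ℕ) : Continuous (gg r) := by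
  apply continuous_const.sub
  apply Continuous.rpow_const (continuous_id.max continuous_const)
  intro x
  left
  have : (1:ℝ) ≤ max x 1 := le_max_right _ _
  positivity

lemma gg_mem (r : ℕ) (hr : 2 ≤ r) {x : ℝ} (hx : 1 ≤ x) : gg r x ∈ Set.Ico (0:ℝ) 1 := by
  have hs := hs_ge r hr
  have hx0 : (0:ℝ) < x := by linarith
  rw [gg, max_eq_left hx]
  constructor
  · have : x ^ (-((r:ℝ) - 1)) ≤ 1 :=
      Real.rpow_le_one_of_one_le_of_nonpos hx (by linarith)
    linarith
  · have : 0 < x ^ (-((r:ℝ) - 1)) := Real.rpow_pos_of_pos hx0 _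
    linarith

lemma gg_lt (r : ℕ) (hr : 2 ≤ r) {x y : ℝ} (hx : 1 ≤ x) (hxy : x < y) :
    gg r x < gg r y := by
  have hs := hs_ge r hr
  have hx0 : (0:ℝ) < x := by linarith
  rw [gg, gg, max_eq_left hx, max_eq_left (by linarith : (1:ℝ) ≤ y)]
  have : y ^ (-((r:ℝ) - 1)) < x ^ (-((r:ℝ) - 1)) :=
    Real.rpow_lt_rpow_of_neg hx0 hxy (by linarith)
  linarith

lemma gg_le (r : ℕ) (hr : 2 ≤ r) {x y : ℝ} (hx : 1 ≤ x) (hxy : x ≤ y) :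
    gg r x ≤ gg r y := by
  rcases eq_or_lt_of_le hxy with rfl | h
  · exact le_refl _
  · exact (gg_lt r hr hx h).le

lemma gg_surj (r : ℕ) (hr : 2 ≤ r) {a : ℝ} (ha : a ∈ Set.Ico (0:ℝ) 1) :
    ∃ x : ℝ, 1 ≤ x ∧ gg r x = a := by
  have hs := hs_ge r hr
  have hs0 : ((r:ℝ) - 1) ≠ 0 := by linarith
  have h1a : 0 < 1 - a := by linarith [ha.2]
  refine ⟨(1 - a) ^ (-((r:ℝ) - 1)⁻¹), ?_, ?_⟩
  · apply Real.one_le_rpow_of_pos_of_le_one_of_nonpos h1a (by linarith [ha.1])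
    simp only [neg_nonpos]
    positivity
  · have h1 : (1:ℝ) ≤ (1 - a) ^ (-((r:ℝ) - 1)⁻¹) :=
      Real.one_le_rpow_of_pos_of_le_one_of_nonpos h1a (by linarith [ha.1])
        (by simp only [neg_nonpos]; positivity)
    rw [gg, max_eq_left h1, ← Real.rpow_mul h1a.le]
    have : -((r:ℝ) - 1)⁻¹ * -((r:ℝ) - 1) = 1 := by
      field_simp
    rw [this, Real.rpow_one]
    ring
lemma oplus_gg (r : ℕ) (hr : 2 ≤ r) {x y : ℝ} (hx : 1 ≤ x) (hy : 1 ≤ y) :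
    oplus r (gg r x) (gg r y) = gg r (x + y) := by
  have hs := hs_ge r hr
  set s : ℝ := (r:ℝ) - 1 with hsdef
  have hs0 : s ≠ 0 := by linarith
  have hx0 : (0:ℝ) < x := by linarith
  have hy0 : (0:ℝ) < y := by linarith
  have hxy0 : (0:ℝ) < x + y := by linarith
  have hxy1 : (1:ℝ) ≤ x + y := by linarith
  have hu : 0 < x ^ (-s) := Real.rpow_pos_of_pos hx0 _
  have hv : 0 < y ^ (-s) := Real.rpow_pos_of_pos hy0 _
  rw [gg, gg, gg, max_eq_left hx, max_eq_left hy, max_eq_left hxy1, oplus]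
  rw [if_neg (by intro h; have h1 := h.1; nlinarith [h1])]
  have e1 : 1 - (1 - x ^ (-s)) = x ^ (-s) := by ring
  have e2 : 1 - (1 - y ^ (-s)) = y ^ (-s) := by ring
  rw [e1, e2]
  have hux : (x ^ (-s)) ^ s⁻¹ = x⁻¹ := by
    rw [← Real.rpow_mul hx0.le]
    have h : -s * s⁻¹ = -1 := by field_simp
    rw [h, Real.rpow_neg_one]
  have huy : (y ^ (-s)) ^ s⁻¹ = y⁻¹ := by
    rw [← Real.rpow_mul hy0.le]
    have h : -s * s⁻¹ = -1 := by field_simp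
    rw [h, Real.rpow_neg_one]
  rw [hux, huy]
  have hd : ((x⁻¹ + y⁻¹ : ℝ)) ^ (r - 1) = (x⁻¹ + y⁻¹ : ℝ) ^ (s : ℝ) := by
    rw [← Real.rpow_natCast _ (r - 1)]
    congr 1
    rw [Nat.cast_sub (by omega : 1 ≤ r), Nat.cast_one]
  rw [hd]
  have hxys : x⁻¹ + y⁻¹ = (x + y) / (x * y) := by
    field_simp
    ring
  rw [hxys, Real.div_rpow hxy0.le (by positivity), Real.mul_rpow hx0.le hy0.le,
    Real.rpow_neg hx0.le, Real.rpow_neg hy0.le, Real.rpow_neg hxy0.le]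
  have px : 0 < x ^ s := Real.rpow_pos_of_pos hx0 _
  have py : 0 < y ^ s := Real.rpow_pos_of_pos hy0 _
  have pxy : 0 < (x + y) ^ s := Real.rpow_pos_of_pos hxy0 _
  field_simp
  simp only [hsdef]
  ring

theorem stmt_10 (r : ℕ) (hr : 2 ≤ r) (A : Set ℝ) (hA : A ⊆ Set.Ico 0 1)
    (hmeas : MeasurableSet A) (hpos : 0 < MeasureTheory.volume A)
    (hclosed : ∀ a ∈ A, ∀ b ∈ A, oplus r a b ∈ A) :
    ∃ a b : ℝ, a < b ∧ Set.Ioo a b ⊆ A := by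
  classical
  have hs := hs_ge r hr
  set s : ℝ := (r:ℝ) - 1 with hsdef
  set B : Set ℝ := Set.Ici 1 ∩ (gg r) ⁻¹' A with hBdef
  have hB : MeasurableSet B := measurableSet_Ici.inter (hmeas.preimage (gg_continuous r).measurable)
  have hBadd : ∀ x ∈ B, ∀ y ∈ B, x + y ∈ B := by
    intro x hx y hy
    constructor
    · have h1 : (1:ℝ) ≤ x := hx.1
      have h2 : (1:ℝ) ≤ y := hy.1
      simp only [Set.mem_Ici]
      linarith
    · rw [Set.mem_preimage, ← oplus_gg r hr hx.1 hy.1]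
      exact hclosed _ hx.2 _ hy.2
  -- B has positive measure
  have hBpos : 0 < volume B := by
    by_contra h
    have hB0 : volume B = 0 := by simpa [not_lt, le_zero_iff] using h
    have hlip : LipschitzOnWith s.toNNReal (gg r) (Set.Ici 1) := by
      apply Convex.lipschitzOnWith_of_nnnorm_hasDerivWithin_le
        (f' := fun x => -((-s) * x ^ (-s - 1))) (convex_Ici 1)
      · intro x hx
        have hx1 : (1:ℝ) ≤ x := hx
        have h0 : HasDerivAt (fun z : ℝ => z ^ (-s)) ((-s) * x ^ (-s - 1)) x :=
          Real.hasDerivAt_rpow_const (Or.inl (by positivity : x ≠ 0))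
        have h1 := (h0.const_sub 1).hasDerivWithinAt (s := Set.Ici 1)
        exact h1.congr (fun y hy => by rw [gg, max_eq_left (hy : (1:ℝ) ≤ y)])
          (by rw [gg, max_eq_left hx1])
      · intro x hx
        have hx1 : (1:ℝ) ≤ x := hx
        have hp : 0 < x ^ (-s - 1) := Real.rpow_pos_of_pos (by linarith) _
        have hp1 : x ^ (-s - 1) ≤ 1 :=
          Real.rpow_le_one_of_one_le_of_nonpos hx1 (by linarith)
        rw [← NNReal.coe_le_coe, coe_nnnorm, Real.coe_toNNReal _ (by linarith : (0:ℝ) ≤ s)]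
        have : -((-s) * x ^ (-s - 1)) = s * x ^ (-s - 1) := by ring
        rw [this, Real.norm_eq_abs, abs_of_nonneg (by positivity)]
        nlinarith
    have himg : A ⊆ gg r '' B := by
      intro a ha
      obtain ⟨x, hx1, hx2⟩ := gg_surj r hr (hA ha)
      exact ⟨x, ⟨hx1, by rw [Set.mem_preimage, hx2]; exact ha⟩, hx2⟩
    have hBsub : B ⊆ Set.Ici 1 := Set.inter_subset_left
    have hle := (hlip.mono hBsub).hausdorffMeasure_image_le
      (zero_le_one : (0:ℝ) ≤ 1)
    simp only [hausdorffMeasure_real] at hle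
    rw [hB0, mul_zero] at hle
    have : volume A = 0 := le_antisymm (le_trans (measure_mono himg) hle) zero_le
    exact absurd this hpos.ne'
  -- find t with positive measure of B ∩ (t - ·)⁻¹ B
  have key : ∃ t : ℝ, 0 < volume (B ∩ (fun x => t - x) ⁻¹' B) := by
    by_contra hcon
    push_neg at hcon
    have h0 : ∀ t : ℝ, volume (B ∩ (fun x => t - x) ⁻¹' B) = 0 := fun t =>
      le_antisymm (by simpa [le_zero_iff] using hcon t) zero_le
    have hmeasE : ∀ t : ℝ, MeasurableSet (B ∩ (fun x : ℝ => t - x) ⁻¹' B) := fun t =>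
      hB.inter (hB.preimage (measurable_const.sub measurable_id))
    set f : ℝ → ℝ → ℝ≥0∞ := fun t x =>
      B.indicator (fun _ => 1) x * B.indicator (fun _ => 1) (t - x) with hfdef
    have hfm : Measurable (Function.uncurry f) := by
      apply Measurable.mul
      · exact (measurable_one.indicator hB).comp measurable_snd
      · exact (measurable_one.indicator hB).comp (measurable_fst.sub measurable_snd)
    have swap := lintegral_lintegral_swap (μ := volume) (ν := volume) (f := f) hfm.aemeasurable
    have hL : (∫⁻ t, ∫⁻ x, f t x) = 0 := by
      have hinner : ∀ t : ℝ, (∫⁻ x, f t x) = 0 := by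
        intro t
        have heq : (fun x => f t x)
            = (B ∩ (fun x : ℝ => t - x) ⁻¹' B).indicator (fun _ => 1) := by
          funext x
          by_cases h1 : x ∈ B <;> by_cases h2 : t - x ∈ B <;>
            simp [hfdef, Set.indicator, h1, h2, Set.mem_inter_iff]
        rw [heq]
        exact (lintegral_indicator_one (hmeasE t)).trans (h0 t)
      simp [hinner]
    have hR : (∫⁻ x, ∫⁻ t, f t x) = volume B * volume B := by
      have hinner : ∀ x : ℝ, (∫⁻ t, f t x) = B.indicator (fun _ => 1) x * volume B := by
        intro x
        have hm : Measurable fun t : ℝ => B.indicator (fun _ => (1:ℝ≥0∞)) (t - x) :=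
          (measurable_one.indicator hB).comp (measurable_id.sub_const x)
        rw [lintegral_const_mul _ hm]
        congr 1
        rw [lintegral_sub_right_eq_self (B.indicator fun _ => (1:ℝ≥0∞)) x]
        exact lintegral_indicator_one hB
      simp_rw [hinner]
      have hm2 : Measurable fun x : ℝ => B.indicator (fun _ => (1:ℝ≥0∞)) x :=
        measurable_one.indicator hB
      have hind : (∫⁻ x : ℝ, B.indicator (fun _ => (1:ℝ≥0∞)) x) = volume B :=
        lintegral_indicator_one hB
      rw [lintegral_mul_const _ hm2, hind]
    have hcontra : (0:ℝ≥0∞) = volume B * volume B := by rw [← hL, swap, hR]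
    exact absurd hcontra.symm (ENNReal.mul_pos hBpos.ne' hBpos.ne').ne'
  obtain ⟨t, htpos⟩ := key
  set E : Set ℝ := B ∩ (fun x => t - x) ⁻¹' B with hEdef
  have hE : MeasurableSet E := hB.inter (hB.preimage (measurable_const.sub measurable_id))
  have hSt : E - E ∈ nhds (0:ℝ) :=
    MeasureTheory.Measure.sub_mem_nhds_zero_of_addHaar_pos volume E hE htpos
  obtain ⟨ε, hε, hball⟩ := Metric.mem_nhds_iff.mp hSt
  obtain ⟨x0, hx0⟩ : E.Nonempty := nonempty_of_measure_ne_zero htpos.ne'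
  have ht2 : 2 ≤ t := by
    have h1 : (1:ℝ) ≤ x0 := hx0.1.1
    have h2 : (1:ℝ) ≤ t - x0 := (hx0.2 : t - x0 ∈ B).1
    linarith
  set δ : ℝ := min ε 1 with hδdef
  have hδ0 : 0 < δ := lt_min hε one_pos
  have hδ1 : δ ≤ 1 := min_le_right _ _
  have hδε : δ ≤ ε := min_le_left _ _
  have hIoo : Set.Ioo (t - δ) (t + δ) ⊆ B := by
    intro w hw
    have hwt : w - t ∈ Metric.ball (0:ℝ) ε := by
      rw [Metric.mem_ball, Real.dist_eq, sub_zero, abs_lt]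
      constructor <;> [linarith [hw.1]; linarith [hw.2]]
    obtain ⟨e1, he1, e2, he2, hee⟩ := Set.mem_sub.mp (hball hwt)
    have hw' : w = e1 + (t - e2) := by linarith [hee]
    rw [hw']
    exact hBadd e1 he1.1 (t - e2) (he2.2 : t - e2 ∈ B)
  refine ⟨gg r (t - δ), gg r (t + δ), gg_lt r hr (by linarith) (by linarith), ?_⟩
  intro v hv
  have hmem1 := gg_mem r hr (by linarith : (1:ℝ) ≤ t - δ)
  have hmem2 := gg_mem r hr (by linarith : (1:ℝ) ≤ t + δ)
  have hv0 : 0 ≤ v := le_trans hmem1.1 hv.1.le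
  have hv1 : v < 1 := lt_trans hv.2 hmem2.2
  obtain ⟨x, hx1, hxv⟩ := gg_surj r hr ⟨hv0, hv1⟩
  have hxl : t - δ < x := by
    by_contra hc
    push_neg at hc
    have hle := gg_le r hr hx1 hc
    rw [hxv] at hle
    exact absurd hv.1 (not_lt.mpr hle)
  have hxr : x < t + δ := by
    by_contra hc
    push_neg at hc
    have hle := gg_le r hr (by linarith : (1:ℝ) ≤ t + δ) hc
    rw [hxv] at hle
    exact absurd hv.2 (not_lt.mpr hle)
  have hxB : x ∈ B := hIoo ⟨hxl, hxr⟩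
  rw [← hxv]
  exact hxB.2
end

section
/- Let G be an r-graph and H an s-graph (r,s ≥ 1), and let G*H be the (r+s)-graph on V(G) ⊔ V(H) with edges {e ∪ f : e ∈ E(G), f ∈ E(H)}. Then the Lagrangians satisfy λ(G*H) = λ(G) · λ(H) · C(r+s, r) · r^r s^s / (r+s)^{r+s}. -/
open Finset
set_option linter.unusedSectionVars false
set_option linter.unusedVariables false
set_option maxHeartbeats 1000000

noncomputable def lag {V : Type*} [Fintype V] (r : ℕ) (E : Finset (Finset V)) : ℝ :=
  sSup ((fun x : V → ℝ => (r.factorial : ℝ) * ∑ e ∈ E, ∏ i ∈ e, x i) '' stdSimplex ℝ V)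

section aux

variable {V : Type*} [Fintype V]

lemma lag_pcont (c : ℝ) (E : Finset (Finset V)) :
    Continuous fun x : V → ℝ => c * ∑ e ∈ E, ∏ i ∈ e, x i :=
  continuous_const.mul <| continuous_finset_sum _ fun e _ =>
    continuous_finset_prod _ fun i _ => continuous_apply i

lemma lag_max [Nonempty V] (c : ℝ) (E : Finset (Finset V)) :
    ∃ x ∈ stdSimplex ℝ V,
      sSup ((fun x : V → ℝ => c * ∑ e ∈ E, ∏ i ∈ e, x i) '' stdSimplex ℝ V)
        = c * ∑ e ∈ E, ∏ i ∈ e, x i ∧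
      ∀ y ∈ stdSimplex ℝ V, c * ∑ e ∈ E, ∏ i ∈ e, y i ≤ c * ∑ e ∈ E, ∏ i ∈ e, x i := by
  classical
  exact (isCompact_stdSimplex ℝ V).exists_sSup_image_eq_and_ge
    ⟨_, single_mem_stdSimplex ℝ (Classical.arbitrary V)⟩ (lag_pcont c E).continuousOn

lemma lag_pval_nonneg {x : V → ℝ} (hx : x ∈ stdSimplex ℝ V) {c : ℝ} (hc : 0 ≤ c)
    (E : Finset (Finset V)) : 0 ≤ c * ∑ e ∈ E, ∏ i ∈ e, x i :=
  mul_nonneg hc <| Finset.sum_nonneg fun e _ => Finset.prod_nonneg fun i _ => hx.1 i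

end aux

lemma lag_amgm (r s : ℕ) (hr : 1 ≤ r) (hs : 1 ≤ s) {a b : ℝ} (ha : 0 ≤ a) (hb : 0 ≤ b)
    (hab : a + b = 1) :
    a ^ r * b ^ s ≤ (r : ℝ) ^ r * (s : ℝ) ^ s / ((r : ℝ) + s) ^ (r + s) := by
  have hrp : (0:ℝ) < r := by exact_mod_cast hr
  have hsp : (0:ℝ) < s := by exact_mod_cast hs
  have hnp : (0:ℝ) < (r:ℝ) + s := by linarith
  set n : ℝ := (r:ℝ) + s with hn
  set p : ℝ := a * n / r with hp
  set q : ℝ := b * n / s with hq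
  have hpn : 0 ≤ p := by positivity
  have hqn : 0 ≤ q := by positivity
  have hw : (r:ℝ)/n + (s:ℝ)/n = 1 := by field_simp; exact hn.symm
  have h1 : p ^ ((r:ℝ)/n) * q ^ ((s:ℝ)/n) ≤ ((r:ℝ)/n) * p + ((s:ℝ)/n) * q :=
    Real.geom_mean_le_arith_mean2_weighted (by positivity) (by positivity) hpn hqn hw
  have h2 : ((r:ℝ)/n) * p + ((s:ℝ)/n) * q = 1 := by
    have e1 : ((r:ℝ)/n) * p = a := by rw [hp]; field_simp
    have e2 : ((s:ℝ)/n) * q = b := by rw [hq]; field_simp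
    rw [e1, e2, hab]
  have h3 : (p ^ ((r:ℝ)/n) * q ^ ((s:ℝ)/n)) ^ (r+s) ≤ 1 := by
    apply pow_le_one₀ (by positivity) (h2 ▸ h1)
  have h4 : (p ^ ((r:ℝ)/n) * q ^ ((s:ℝ)/n)) ^ (r+s) = p ^ r * q ^ s := by
    rw [mul_pow, ← Real.rpow_natCast (p ^ ((r:ℝ)/n)) (r+s),
      ← Real.rpow_natCast (q ^ ((s:ℝ)/n)) (r+s),
      ← Real.rpow_mul hpn, ← Real.rpow_mul hqn]
    have e1 : (r:ℝ)/n * ((r+s : ℕ):ℝ) = (r:ℝ) := by push_cast; field_simp; exact hn.symm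
    have e2 : (s:ℝ)/n * ((r+s : ℕ):ℝ) = (s:ℝ) := by push_cast; field_simp; exact hn.symm
    rw [e1, e2, Real.rpow_natCast, Real.rpow_natCast]
  rw [h4] at h3
  have h5 : a^r * (n^r / (r:ℝ)^r) * (b^s * (n^s / (s:ℝ)^s)) ≤ 1 := by
    rw [hp, hq, div_pow, div_pow, mul_pow, mul_pow] at h3
    calc a^r * (n^r / (r:ℝ)^r) * (b^s * (n^s / (s:ℝ)^s))
        = a^r * n^r / (r:ℝ)^r * (b^s * n^s / (s:ℝ)^s) := by ring
      _ ≤ 1 := h3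
  rw [le_div_iff₀ (by positivity), pow_add]
  calc a^r * b^s * (n^r * n^s)
      = (r:ℝ)^r * (s:ℝ)^s * (a^r * (n^r/(r:ℝ)^r) * (b^s * (n^s/(s:ℝ)^s))) := by
        field_simp
    _ ≤ (r:ℝ)^r * (s:ℝ)^s * 1 := mul_le_mul_of_nonneg_left h5 (by positivity)
    _ = (r:ℝ)^r * (s:ℝ)^s := by ring

lemma lag_sum_decomp {V W : Type*} [DecidableEq V] [DecidableEq W]
    (EG : Finset (Finset V)) (EH : Finset (Finset W)) (x : V ⊕ W → ℝ) :
    ∑ e' ∈ (EG ×ˢ EH).image (fun p =>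
        p.1.map (Function.Embedding.inl : V ↪ V ⊕ W) ∪
        p.2.map (Function.Embedding.inr : W ↪ V ⊕ W)), ∏ i ∈ e', x i
    = (∑ e ∈ EG, ∏ v ∈ e, x (Sum.inl v)) * (∑ f ∈ EH, ∏ w ∈ f, x (Sum.inr w)) := by
  classical
  rw [Finset.sum_image]
  · rw [Finset.sum_product, Finset.sum_mul_sum]
    refine Finset.sum_congr rfl fun e he => Finset.sum_congr rfl fun f hf => ?_
    rw [Finset.prod_union (by simp [Finset.disjoint_left]), Finset.prod_map, Finset.prod_map]
    rfl
  · rintro ⟨e, f⟩ h ⟨e', f'⟩ h' heq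
    simp only [Prod.mk.injEq]
    constructor
    · ext v
      have := congrArg (fun S => Sum.inl v ∈ S) heq
      simpa using this
    · ext w
      have := congrArg (fun S => Sum.inr w ∈ S) heq
      simpa using this

lemma lag_value_eq {V W : Type*} [Fintype V] [Fintype W] [DecidableEq V] [DecidableEq W]
    (r s : ℕ) (EG : Finset (Finset V)) (EH : Finset (Finset W))
    (hEG : ∀ e ∈ EG, e.card = r) (hEH : ∀ f ∈ EH, f.card = s)
    (x : V ⊕ W → ℝ) (a b : ℝ) (y : V → ℝ) (z : W → ℝ)
    (hxy : ∀ v, x (Sum.inl v) = a * y v) (hxz : ∀ w, x (Sum.inr w) = b * z w) :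
    ((r+s).factorial : ℝ) * ∑ e' ∈ (EG ×ˢ EH).image (fun p =>
        p.1.map (Function.Embedding.inl : V ↪ V ⊕ W) ∪
        p.2.map (Function.Embedding.inr : W ↪ V ⊕ W)), ∏ i ∈ e', x i
    = ((r+s).choose r : ℝ) * (a ^ r * b ^ s) *
        ((r.factorial : ℝ) * ∑ e ∈ EG, ∏ v ∈ e, y v) *
        ((s.factorial : ℝ) * ∑ f ∈ EH, ∏ w ∈ f, z w) := by
  rw [lag_sum_decomp]
  have hG : ∑ e ∈ EG, ∏ v ∈ e, x (Sum.inl v) = a ^ r * ∑ e ∈ EG, ∏ v ∈ e, y v := by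
    rw [Finset.mul_sum]
    refine Finset.sum_congr rfl fun e he => ?_
    rw [show (∏ v ∈ e, x (Sum.inl v)) = ∏ v ∈ e, a * y v from
      Finset.prod_congr rfl fun v _ => hxy v, Finset.prod_mul_distrib, Finset.prod_const, hEG e he]
  have hH : ∑ f ∈ EH, ∏ w ∈ f, x (Sum.inr w) = b ^ s * ∑ f ∈ EH, ∏ w ∈ f, z w := by
    rw [Finset.mul_sum]
    refine Finset.sum_congr rfl fun f hf => ?_
    rw [show (∏ w ∈ f, x (Sum.inr w)) = ∏ w ∈ f, b * z w from
      Finset.prod_congr rfl fun w _ => hxz w, Finset.prod_mul_distrib, Finset.prod_const, hEH f hf]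
  have hfac : ((r+s).factorial : ℝ) = ((r+s).choose r : ℝ) * r.factorial * s.factorial := by
    have := Nat.choose_mul_factorial_mul_factorial (Nat.le_add_right r s)
    rw [Nat.add_sub_cancel_left] at this
    exact_mod_cast this.symm
  rw [hG, hH, hfac]; ring

theorem stmt_13 {V W : Type*} [Fintype V] [Fintype W] [DecidableEq V] [DecidableEq W]
    [Nonempty V] [Nonempty W] (r s : ℕ) (hr : 1 ≤ r) (hs : 1 ≤ s)
    (EG : Finset (Finset V)) (EH : Finset (Finset W))
    (hEG : ∀ e ∈ EG, e.card = r) (hEH : ∀ f ∈ EH, f.card = s) :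
    lag (r + s) ((EG ×ˢ EH).image (fun p =>
      p.1.map (Function.Embedding.inl : V ↪ V ⊕ W) ∪
      p.2.map (Function.Embedding.inr : W ↪ V ⊕ W)))
    = lag r EG * lag s EH * ((r + s).choose r : ℝ) * (r : ℝ) ^ r * (s : ℝ) ^ s /
        ((r : ℝ) + s) ^ (r + s) := by
  classical
  have hrp : (0:ℝ) < r := by exact_mod_cast hr
  have hsp : (0:ℝ) < s := by exact_mod_cast hs
  have hnp : (0:ℝ) < (r:ℝ) + s := by linarith
  set E' := (EG ×ˢ EH).image (fun p =>
      p.1.map (Function.Embedding.inl : V ↪ V ⊕ W) ∪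
      p.2.map (Function.Embedding.inr : W ↪ V ⊕ W)) with hE'
  obtain ⟨u, hu, hGu, hGmax⟩ := lag_max (r.factorial : ℝ) EG
  obtain ⟨v, hv, hHv, hHmax⟩ := lag_max (s.factorial : ℝ) EH
  obtain ⟨x, hx, hXx, hXmax⟩ := lag_max (((r+s).factorial : ℕ) : ℝ) E'
  have hLG : lag r EG = (r.factorial : ℝ) * ∑ e ∈ EG, ∏ i ∈ e, u i := hGu
  have hLH : lag s EH = (s.factorial : ℝ) * ∑ f ∈ EH, ∏ i ∈ f, v i := hHv
  have hLX : lag (r+s) E' = ((r+s).factorial : ℝ) * ∑ e' ∈ E', ∏ i ∈ e', x i := hXx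
  have hGn : 0 ≤ lag r EG := by rw [hLG]; exact lag_pval_nonneg hu (by positivity) EG
  have hHn : 0 ≤ lag s EH := by rw [hLH]; exact lag_pval_nonneg hv (by positivity) EH
  apply le_antisymm
  · -- upper bound
    set a : ℝ := ∑ i, x (Sum.inl i) with hadef
    set b : ℝ := ∑ j, x (Sum.inr j) with hbdef
    have ha : 0 ≤ a := Finset.sum_nonneg fun i _ => hx.1 (Sum.inl i)
    have hb : 0 ≤ b := Finset.sum_nonneg fun j _ => hx.1 (Sum.inr j)
    have hab : a + b = 1 := by
      have := hx.2
      rwa [Fintype.sum_sum_type] at this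
    set y : V → ℝ := if a = 0 then u else fun i => x (Sum.inl i) / a with hy
    set z : W → ℝ := if b = 0 then v else fun j => x (Sum.inr j) / b with hz
    have hxy : ∀ i, x (Sum.inl i) = a * y i := by
      intro i
      rw [hy]
      by_cases h0 : a = 0
      · simp only [h0, if_true, zero_mul]
        have hsum : ∑ i, x (Sum.inl i) = 0 := by rw [← hadef]; exact h0
        exact (Finset.sum_eq_zero_iff_of_nonneg
          (fun i _ => hx.1 (Sum.inl i))).1 hsum i (Finset.mem_univ i)
      · simp only [h0, if_false]
        field_simp
    have hxz : ∀ j, x (Sum.inr j) = b * z j := by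
      intro j
      rw [hz]
      by_cases h0 : b = 0
      · simp only [h0, if_true, zero_mul]
        have hsum : ∑ j, x (Sum.inr j) = 0 := by rw [← hbdef]; exact h0
        exact (Finset.sum_eq_zero_iff_of_nonneg
          (fun j _ => hx.1 (Sum.inr j))).1 hsum j (Finset.mem_univ j)
      · simp only [h0, if_false]
        field_simp
    have hymem : y ∈ stdSimplex ℝ V := by
      rw [hy]
      by_cases h0 : a = 0
      · simpa [h0] using hu
      · simp only [h0, if_false]
        refine ⟨fun i => div_nonneg (hx.1 (Sum.inl i)) ha, ?_⟩
        rw [← Finset.sum_div, ← hadef, div_self h0]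
    have hzmem : z ∈ stdSimplex ℝ W := by
      rw [hz]
      by_cases h0 : b = 0
      · simpa [h0] using hv
      · simp only [h0, if_false]
        refine ⟨fun j => div_nonneg (hx.1 (Sum.inr j)) hb, ?_⟩
        rw [← Finset.sum_div, ← hbdef, div_self h0]
    have hval := lag_value_eq r s EG EH hEG hEH x a b y z hxy hxz
    rw [hLX, hval]
    have hyle : (r.factorial : ℝ) * ∑ e ∈ EG, ∏ i ∈ e, y i ≤ lag r EG := by
      rw [hLG]; exact hGmax y hymem
    have hzle : (s.factorial : ℝ) * ∑ f ∈ EH, ∏ i ∈ f, z i ≤ lag s EH := by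
      rw [hLH]; exact hHmax z hzmem
    have hyn : 0 ≤ (r.factorial : ℝ) * ∑ e ∈ EG, ∏ i ∈ e, y i :=
      lag_pval_nonneg hymem (by positivity) EG
    have hzn : 0 ≤ (s.factorial : ℝ) * ∑ f ∈ EH, ∏ i ∈ f, z i :=
      lag_pval_nonneg hzmem (by positivity) EH
    have hamgm := lag_amgm r s hr hs ha hb hab
    have habn : 0 ≤ a ^ r * b ^ s := by positivity
    calc ((r+s).choose r : ℝ) * (a ^ r * b ^ s) *
          ((r.factorial : ℝ) * ∑ e ∈ EG, ∏ i ∈ e, y i) *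
          ((s.factorial : ℝ) * ∑ f ∈ EH, ∏ i ∈ f, z i)
        ≤ ((r+s).choose r : ℝ) * ((r:ℝ)^r * (s:ℝ)^s / ((r:ℝ)+s)^(r+s)) *
          (lag r EG) * (lag s EH) := by
          have h1 : (0:ℝ) ≤ ((r+s).choose r : ℝ) := by positivity
          gcongr
      _ = lag r EG * lag s EH * ((r + s).choose r : ℝ) * (r : ℝ) ^ r * (s : ℝ) ^ s /
          ((r : ℝ) + s) ^ (r + s) := by ring
  · -- lower bound
    set n : ℝ := (r:ℝ) + s with hn
    set x₀ : V ⊕ W → ℝ := Sum.elim (fun i => ((r:ℝ)/n) * u i) (fun j => ((s:ℝ)/n) * v j)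
      with hx₀
    have hx₀mem : x₀ ∈ stdSimplex ℝ (V ⊕ W) := by
      constructor
      · rintro (i | j)
        · exact mul_nonneg (by positivity) (hu.1 i)
        · exact mul_nonneg (by positivity) (hv.1 j)
      · rw [Fintype.sum_sum_type]
        simp only [hx₀, Sum.elim_inl, Sum.elim_inr]
        rw [← Finset.mul_sum, ← Finset.mul_sum, hu.2, hv.2]
        field_simp
        exact hn.symm
    have hval := lag_value_eq r s EG EH hEG hEH x₀ ((r:ℝ)/n) ((s:ℝ)/n) u v
      (fun i => rfl) (fun j => rfl)
    have hle : ((r+s).factorial : ℝ) * ∑ e' ∈ E', ∏ i ∈ e', x₀ i ≤ lag (r+s) E' := by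
      rw [hLX]; exact hXmax x₀ hx₀mem
    rw [hval] at hle
    refine le_trans (le_of_eq ?_) hle
    rw [hLG, hLH]
    have hpow : ((r:ℝ)/n) ^ r * ((s:ℝ)/n) ^ s = (r:ℝ)^r * (s:ℝ)^s / n^(r+s) := by
      rw [div_pow, div_pow, pow_add]
      field_simp
    rw [hpow, hn]
    ring
end
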